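/- arXiv:1605.06033 — 2 statements merged into one kernel-verified Lean document; each statement's English description precedes it below -/
import Mathlib

section
/- The universal enveloping algebras U(L) and U(L') are isomorphic as associative 𝕜-algebras, although L and L' are not isomorphic as Lie algebras. -/
universe u v w

open Module

attribute [local instance] LieRing.ofAssociativeRing

/-- `b` is a basis of the Lie algebra `L` of the paper: `Sum.inl i ↦ x_{i+1}`
(for `i : Fin k`), `Sum.inr 0 ↦ D_0`, `Sum.inr 1 ↦ D`, where `D_0` is central, the `x_i`
commute, `[D, x_i] = x_i` for `i = 1, …, k-2`, `[D, x_{k-1}] = x_k` and `[D, x_k] = 0`. -/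
def IsLBasis {𝕜 : Type u} [Field 𝕜] {L : Type v} [LieRing L] [LieAlgebra 𝕜 L]
    {k : ℕ} (b : Basis (Fin k ⊕ Fin 2) 𝕜 L) : Prop :=
  (∀ i j : Fin k, ⁅b (Sum.inl i), b (Sum.inl j)⁆ = 0) ∧
  (∀ v : Fin k ⊕ Fin 2, ⁅b (Sum.inr 0), b v⁆ = 0) ∧
  (∀ i : Fin k, (i : ℕ) < k - 2 → ⁅b (Sum.inr 1), b (Sum.inl i)⁆ = b (Sum.inl i)) ∧
  (∀ i j : Fin k, (i : ℕ) = k - 2 → (j : ℕ) = k - 1 →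
      ⁅b (Sum.inr 1), b (Sum.inl i)⁆ = b (Sum.inl j)) ∧
  (∀ i : Fin k, (i : ℕ) = k - 1 → ⁅b (Sum.inr 1), b (Sum.inl i)⁆ = 0)

/-- `b` is a basis of the Lie algebra `L'` of the paper: `Sum.inl i ↦ x_{i+1}`
(for `i : Fin k`), `Sum.inr 0 ↦ D`, `Sum.inr 1 ↦ D'`, where the `x_i` commute,
`[D, D'] = 0`, `[D, x_i] = [D', x_i] = x_i` for `i = 1, …, k-2`, `[D, x_{k-1}] = x_k`,
`[D', x_{k-1}] = 0` and `[D, x_k] = [D', x_k] = 0`. -/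
def IsL'Basis {𝕜 : Type u} [Field 𝕜] {L' : Type v} [LieRing L'] [LieAlgebra 𝕜 L']
    {k : ℕ} (b : Basis (Fin k ⊕ Fin 2) 𝕜 L') : Prop :=
  (∀ i j : Fin k, ⁅b (Sum.inl i), b (Sum.inl j)⁆ = 0) ∧
  (⁅b (Sum.inr 0), b (Sum.inr 1)⁆ = 0) ∧
  (∀ i : Fin k, (i : ℕ) < k - 2 →
      ⁅b (Sum.inr 0), b (Sum.inl i)⁆ = b (Sum.inl i) ∧
      ⁅b (Sum.inr 1), b (Sum.inl i)⁆ = b (Sum.inl i)) ∧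
  (∀ i j : Fin k, (i : ℕ) = k - 2 → (j : ℕ) = k - 1 →
      ⁅b (Sum.inr 0), b (Sum.inl i)⁆ = b (Sum.inl j) ∧
      ⁅b (Sum.inr 1), b (Sum.inl i)⁆ = 0) ∧
  (∀ i : Fin k, (i : ℕ) = k - 1 →
      ⁅b (Sum.inr 0), b (Sum.inl i)⁆ = 0 ∧ ⁅b (Sum.inr 1), b (Sum.inl i)⁆ = 0)

section ringlem
variable {R : Type*} [Ring R] (p : ℕ) [Fact p.Prime] [CharP R p]

lemma aux_pow_mul (d x : R) (h : d * x = x * d + x) (n : ℕ) :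
    d ^ n * x = x * (d + 1) ^ n := by
  induction n with
  | zero => simp
  | succ n ih =>
    rw [pow_succ', mul_assoc, ih, ← mul_assoc, h, pow_succ', ← mul_assoc, mul_add, mul_one]

lemma comm1 (d x : R) (h : d * x - x * d = x) : d ^ p * x - x * d ^ p = x := by
  have h' : d * x = x * d + x := by
    rw [add_comm]; exact sub_eq_iff_eq_add.mp h
  rw [aux_pow_mul d x h', add_pow_char_of_commute p (Commute.one_right d), one_pow,
    mul_add, mul_one]
  abel

lemma aux_pow_mul2 (d y z : R) (h1 : d * y = y * d + z) (h2 : Commute d z) (n : ℕ) :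
    d ^ (n + 1) * y = y * d ^ (n + 1) + (n + 1) • (z * d ^ n) := by
  induction n with
  | zero => simpa using h1
  | succ n ih =>
    calc d ^ (n + 1 + 1) * y
        = d ^ (n + 1) * (d * y) := by rw [pow_succ, mul_assoc]
      _ = d ^ (n + 1) * y * d + d ^ (n + 1) * z := by rw [h1, mul_add, ← mul_assoc]
      _ = (y * d ^ (n + 1) + (n + 1) • (z * d ^ n)) * d + z * d ^ (n + 1) := by
          rw [ih, (h2.pow_left (n + 1)).eq]
      _ = y * d ^ (n + 1 + 1) + ((n + 1) • (z * d ^ n * d) + z * d ^ (n + 1)) := by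
          rw [add_mul, smul_mul_assoc, mul_assoc y, ← pow_succ]; abel
      _ = y * d ^ (n + 1 + 1) + (n + 1 + 1) • (z * d ^ (n + 1)) := by
          rw [mul_assoc, ← pow_succ, succ_nsmul (z * d ^ (n+1)) (n+1)]

lemma comm2 (d y z : R) (h1 : d * y - y * d = z) (h2 : Commute d z) :
    d ^ p * y = y * d ^ p := by
  have h1' : d * y = y * d + z := by rw [add_comm]; exact sub_eq_iff_eq_add.mp h1
  obtain ⟨m, hm⟩ : ∃ m, p = m + 1 := ⟨p - 1, by have := (Fact.out : p.Prime).pos; omega⟩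
  have key := aux_pow_mul2 d y z h1' h2 m
  rw [← hm] at key
  rw [key, nsmul_eq_mul, CharP.cast_eq_zero R p, zero_mul, add_zero]
end ringlem

section liehom
variable {𝕜 : Type*} [Field 𝕜] {L : Type*} [LieRing L] [LieAlgebra 𝕜 L]
  {A : Type*} [Ring A] [Algebra 𝕜 A] {ι : Type*}

lemma exists_lieHom (b : Basis ι 𝕜 L) (F : ι → A)
    (h : ∀ i j, (b.constr 𝕜 F) ⁅b i, b j⁆ = ⁅F i, F j⁆) :
    ∃ f : L →ₗ⁅𝕜⁆ A, ∀ x, f x = b.constr 𝕜 F x := by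
  set f := b.constr 𝕜 F with hf
  have key : ∀ x y, f ⁅x, y⁆ = ⁅f x, f y⁆ := by
    let B1 : L →ₗ[𝕜] L →ₗ[𝕜] A := LinearMap.mk₂ 𝕜 (fun x y => f ⁅x, y⁆)
      (fun m₁ m₂ n => by simp only [add_lie, map_add])
      (fun c m n => by simp only [smul_lie, map_smul])
      (fun m n₁ n₂ => by simp only [lie_add, map_add])
      (fun c m n => by simp only [lie_smul, map_smul])
    let B2 : L →ₗ[𝕜] L →ₗ[𝕜] A := LinearMap.mk₂ 𝕜 (fun x y => ⁅f x, f y⁆)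
      (fun m₁ m₂ n => by simp only [map_add, add_lie])
      (fun c m n => by simp only [map_smul, smul_lie])
      (fun m n₁ n₂ => by simp only [map_add, lie_add])
      (fun c m n => by simp only [map_smul, Ring.lie_def, mul_smul_comm, smul_mul_assoc, smul_sub])
    have hB : B1 = B2 := by
      apply b.ext; intro i; apply b.ext; intro j
      have hfb : ∀ i, f (b i) = F i := fun i => b.constr_basis 𝕜 F i
      simpa [B1, B2, hfb] using h i j
    intro x y
    exact LinearMap.congr_fun (LinearMap.congr_fun hB x) y
  exact ⟨{ f with map_lie' := fun {x y} => key x y }, fun x => rfl⟩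

end liehom

lemma charP_uea (𝕜 : Type*) [Field 𝕜] (p : ℕ) [CharP 𝕜 p]
    (L : Type*) [LieRing L] [LieAlgebra 𝕜 L] :
    CharP (UniversalEnvelopingAlgebra 𝕜 L) p := by
  refine charP_of_injective_algebraMap (R := 𝕜) ?_ p
  intro a c hac
  have := congrArg (UniversalEnvelopingAlgebra.lift 𝕜 (0 : L →ₗ⁅𝕜⁆ 𝕜)) hac
  simpa [AlgHom.commutes] using this

lemma phi_exists (p k : ℕ) [hp : Fact p.Prime] (hk : 3 ≤ k)
    (𝕜 : Type u) [Field 𝕜] [CharP 𝕜 p]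
    (L : Type v) [LieRing L] [LieAlgebra 𝕜 L]
    (L' : Type w) [LieRing L'] [LieAlgebra 𝕜 L']
    (b : Basis (Fin k ⊕ Fin 2) 𝕜 L) (hb : IsLBasis b)
    (b' : Basis (Fin k ⊕ Fin 2) 𝕜 L') (hb' : IsL'Basis b') :
    ∃ Φ : UniversalEnvelopingAlgebra 𝕜 L →ₐ[𝕜] UniversalEnvelopingAlgebra 𝕜 L',
      (∀ i : Fin k, Φ (UniversalEnvelopingAlgebra.ι 𝕜 (b (Sum.inl i))) =
          UniversalEnvelopingAlgebra.ι 𝕜 (b' (Sum.inl i))) ∧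
      (Φ (UniversalEnvelopingAlgebra.ι 𝕜 (b (Sum.inr 1))) =
          UniversalEnvelopingAlgebra.ι 𝕜 (b' (Sum.inr 0))) ∧
      (Φ (UniversalEnvelopingAlgebra.ι 𝕜 (b (Sum.inr 0))) =
          (UniversalEnvelopingAlgebra.ι 𝕜 (b' (Sum.inr 0))) ^ p -
          UniversalEnvelopingAlgebra.ι 𝕜 (b' (Sum.inr 1))) := by
  classical
  haveI : CharP (UniversalEnvelopingAlgebra 𝕜 L') p := charP_uea 𝕜 p L'
  obtain ⟨hbx, hbc, hblt, hbmid, hbtop⟩ := hb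
  obtain ⟨hx, hDD', hlt, hmid, htop⟩ := hb'
  set ι2 : L' →ₗ⁅𝕜⁆ UniversalEnvelopingAlgebra 𝕜 L' := UniversalEnvelopingAlgebra.ι 𝕜 with hι2
  set E : UniversalEnvelopingAlgebra 𝕜 L' := ι2 (b' (Sum.inr 0)) with hE
  set E' : UniversalEnvelopingAlgebra 𝕜 L' := ι2 (b' (Sum.inr 1)) with hE'
  set aa : Fin k := ⟨k - 2, by omega⟩ with haa
  set cc : Fin k := ⟨k - 1, by omega⟩ with hcc
  set F : (Fin k ⊕ Fin 2) → UniversalEnvelopingAlgebra 𝕜 L' :=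
    Sum.elim (fun i => ι2 (b' (Sum.inl i))) ![E ^ p - E', E] with hF
  have hF0 : F (Sum.inr 0) = E ^ p - E' := rfl
  have hF1 : F (Sum.inr 1) = E := rfl
  have hFl : ∀ i, F (Sum.inl i) = ι2 (b' (Sum.inl i)) := fun i => rfl
  have bmap : ∀ x y : L', ⁅ι2 x, ι2 y⁆ = ι2 ⁅x, y⁆ := fun x y => (ι2.map_lie x y).symm
  -- basic bracket facts in U(L')
  have bEXlt : ∀ i : Fin k, (i : ℕ) < k - 2 →
      ⁅E, ι2 (b' (Sum.inl i))⁆ = ι2 (b' (Sum.inl i)) :=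
    fun i hi => by rw [hE, bmap, (hlt i hi).1]
  have bE'Xlt : ∀ i : Fin k, (i : ℕ) < k - 2 →
      ⁅E', ι2 (b' (Sum.inl i))⁆ = ι2 (b' (Sum.inl i)) :=
    fun i hi => by rw [hE', bmap, (hlt i hi).2]
  have bEXmid : ⁅E, ι2 (b' (Sum.inl aa))⁆ = ι2 (b' (Sum.inl cc)) := by
    rw [hE, bmap, (hmid aa cc rfl rfl).1]
  have bE'Xmid : ⁅E', ι2 (b' (Sum.inl aa))⁆ = 0 := by
    rw [hE', bmap, (hmid aa cc rfl rfl).2, map_zero ι2]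
  have bEXtop : ⁅E, ι2 (b' (Sum.inl cc))⁆ = 0 := by
    rw [hE, bmap, (htop cc rfl).1, map_zero ι2]
  have bE'Xtop : ⁅E', ι2 (b' (Sum.inl cc))⁆ = 0 := by
    rw [hE', bmap, (htop cc rfl).2, map_zero ι2]
  have bEE' : ⁅E, E'⁆ = 0 := by rw [hE, hE', bmap, hDD', map_zero ι2]
  have bE'E : ⁅E', E⁆ = 0 := by
    have h := bEE'; rw [Ring.lie_def, sub_eq_zero] at h
    rw [Ring.lie_def, sub_eq_zero]; exact h.symm
  -- p-power facts
  have mEp_lt : ∀ i : Fin k, (i : ℕ) < k - 2 →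
      ⁅E ^ p, ι2 (b' (Sum.inl i))⁆ = ι2 (b' (Sum.inl i)) := fun i hi => by
    rw [Ring.lie_def]
    exact comm1 p E _ (by rw [← Ring.lie_def]; exact bEXlt i hi)
  have hcommEtop : Commute E (ι2 (b' (Sum.inl cc))) := by
    have h := bEXtop; rwa [Ring.lie_def, sub_eq_zero] at h
  have mEp_mid : ⁅E ^ p, ι2 (b' (Sum.inl aa))⁆ = 0 := by
    rw [Ring.lie_def, sub_eq_zero]
    exact comm2 p E _ (ι2 (b' (Sum.inl cc)))
      (by rw [← Ring.lie_def]; exact bEXmid) hcommEtop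
  have mEp_top : ⁅E ^ p, ι2 (b' (Sum.inl cc))⁆ = 0 := by
    rw [Ring.lie_def, sub_eq_zero]; exact (hcommEtop.pow_left p).eq
  have mEp_E : ⁅E ^ p, E⁆ = 0 := by
    rw [Ring.lie_def, sub_eq_zero]; exact ((Commute.refl E).pow_left p).eq
  have bCX : ∀ i : Fin k, ⁅E ^ p - E', ι2 (b' (Sum.inl i))⁆ = 0 := by
    intro i
    have hik : (i : ℕ) < k := i.isLt
    rcases (by omega : (i : ℕ) < k - 2 ∨ (i : ℕ) = k - 2 ∨ (i : ℕ) = k - 1) with hi | hi | hi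
    · rw [sub_lie, mEp_lt i hi, bE'Xlt i hi, sub_self]
    · have hia : i = aa := Fin.ext hi
      rw [hia, sub_lie, mEp_mid, bE'Xmid, sub_self]
    · have hic : i = cc := Fin.ext hi
      rw [hic, sub_lie, mEp_top, bE'Xtop, sub_self]
  have bCE : ⁅E ^ p - E', E⁆ = 0 := by rw [sub_lie, mEp_E, bE'E, sub_self]
  have hcond : ∀ u v, (b.constr 𝕜 F) ⁅b u, b v⁆ = ⁅F u, F v⁆ := by
    have hfb : ∀ u, (b.constr 𝕜 F) (b u) = F u := fun u => b.constr_basis 𝕜 F u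
    have fin2 : ∀ r : Fin 2, r = 0 ∨ r = 1 := by decide
    have hmain : ∀ (r : Fin 2) (v),
        (b.constr 𝕜 F) ⁅b (Sum.inr r), b v⁆ = ⁅F (Sum.inr r), F v⁆ := by
      intro r v
      rcases fin2 r with rfl | rfl
      · -- r = 0 : D_0 central
        rw [hbc v, map_zero]
        rcases v with i | r2
        · rw [hFl i, hF0]; exact (bCX i).symm
        · rcases fin2 r2 with rfl | rfl
          · rw [hF0]; exact (lie_self _).symm
          · rw [hF0, hF1]; exact bCE.symm
      · -- r = 1 : D
        rcases v with i | r2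
        · have hik : (i : ℕ) < k := i.isLt
          rcases (by omega : (i : ℕ) < k - 2 ∨ (i : ℕ) = k - 2 ∨ (i : ℕ) = k - 1)
            with hi | hi | hi
          · rw [hblt i hi, hfb, hF1, hFl, bEXlt i hi]
          · have hia : i = aa := Fin.ext hi
            rw [hia, hbmid aa cc rfl rfl, hfb, hF1, hFl cc, hFl aa, bEXmid]
          · have hic : i = cc := Fin.ext hi
            rw [hic, hbtop cc rfl, map_zero, hF1, hFl, bEXtop]
        · rcases fin2 r2 with rfl | rfl
          · have hL : ⁅b (Sum.inr 1), b (Sum.inr 0)⁆ = 0 := by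
              rw [← lie_skew, hbc (Sum.inr 1), neg_zero]
            rw [hL, map_zero, hF1, hF0, ← lie_skew, bCE, neg_zero]
          · rw [lie_self, map_zero, lie_self]
    intro u v
    rcases u with i | r
    · rcases v with j | r
      · rw [hbx i j, map_zero, hFl, hFl, bmap, hx i j, map_zero ι2]
      · calc (b.constr 𝕜 F) ⁅b (Sum.inl i), b (Sum.inr r)⁆
            = -((b.constr 𝕜 F) ⁅b (Sum.inr r), b (Sum.inl i)⁆) := by
              rw [← map_neg, lie_skew]
          _ = -⁅F (Sum.inr r), F (Sum.inl i)⁆ := by rw [hmain r (Sum.inl i)]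
          _ = ⁅F (Sum.inl i), F (Sum.inr r)⁆ := lie_skew _ _
    · exact hmain r v
  obtain ⟨f, hfx⟩ := exists_lieHom b F hcond
  refine ⟨UniversalEnvelopingAlgebra.lift 𝕜 f, ?_, ?_, ?_⟩
  · intro i
    rw [UniversalEnvelopingAlgebra.lift_ι_apply, hfx, b.constr_basis]
    exact hFl i
  · rw [UniversalEnvelopingAlgebra.lift_ι_apply, hfx, b.constr_basis]
    exact hF1
  · rw [UniversalEnvelopingAlgebra.lift_ι_apply, hfx, b.constr_basis]
    exact hF0

lemma psi_exists (p k : ℕ) [hp : Fact p.Prime] (hk : 3 ≤ k)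
    (𝕜 : Type u) [Field 𝕜] [CharP 𝕜 p]
    (L : Type v) [LieRing L] [LieAlgebra 𝕜 L]
    (L' : Type w) [LieRing L'] [LieAlgebra 𝕜 L']
    (b : Basis (Fin k ⊕ Fin 2) 𝕜 L) (hb : IsLBasis b)
    (b' : Basis (Fin k ⊕ Fin 2) 𝕜 L') (hb' : IsL'Basis b') :
    ∃ Ψ : UniversalEnvelopingAlgebra 𝕜 L' →ₐ[𝕜] UniversalEnvelopingAlgebra 𝕜 L,
      (∀ i : Fin k, Ψ (UniversalEnvelopingAlgebra.ι 𝕜 (b' (Sum.inl i))) =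
          UniversalEnvelopingAlgebra.ι 𝕜 (b (Sum.inl i))) ∧
      (Ψ (UniversalEnvelopingAlgebra.ι 𝕜 (b' (Sum.inr 0))) =
          UniversalEnvelopingAlgebra.ι 𝕜 (b (Sum.inr 1))) ∧
      (Ψ (UniversalEnvelopingAlgebra.ι 𝕜 (b' (Sum.inr 1))) =
          (UniversalEnvelopingAlgebra.ι 𝕜 (b (Sum.inr 1))) ^ p -
          UniversalEnvelopingAlgebra.ι 𝕜 (b (Sum.inr 0))) := by
  classical
  haveI : CharP (UniversalEnvelopingAlgebra 𝕜 L) p := charP_uea 𝕜 p L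
  obtain ⟨hbx, hbc, hblt, hbmid, hbtop⟩ := hb
  obtain ⟨hx, hDD', hlt, hmid, htop⟩ := hb'
  set ι1 : L →ₗ⁅𝕜⁆ UniversalEnvelopingAlgebra 𝕜 L := UniversalEnvelopingAlgebra.ι 𝕜 with hι1
  set E : UniversalEnvelopingAlgebra 𝕜 L := ι1 (b (Sum.inr 1)) with hE
  set Z : UniversalEnvelopingAlgebra 𝕜 L := ι1 (b (Sum.inr 0)) with hZ
  set aa : Fin k := ⟨k - 2, by omega⟩ with haa
  set cc : Fin k := ⟨k - 1, by omega⟩ with hcc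
  set G : (Fin k ⊕ Fin 2) → UniversalEnvelopingAlgebra 𝕜 L :=
    Sum.elim (fun i => ι1 (b (Sum.inl i))) ![E, E ^ p - Z] with hG
  have hG0 : G (Sum.inr 0) = E := rfl
  have hG1 : G (Sum.inr 1) = E ^ p - Z := rfl
  have hGl : ∀ i, G (Sum.inl i) = ι1 (b (Sum.inl i)) := fun i => rfl
  have bmap : ∀ x y : L, ⁅ι1 x, ι1 y⁆ = ι1 ⁅x, y⁆ := fun x y => (ι1.map_lie x y).symm
  have bZv : ∀ v, ⁅Z, ι1 (b v)⁆ = 0 := fun v => by rw [hZ, bmap, hbc v, map_zero ι1]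
  have bvZ : ∀ v, ⁅ι1 (b v), Z⁆ = 0 := fun v => by rw [← lie_skew, bZv v, neg_zero]
  have bEYlt : ∀ i : Fin k, (i : ℕ) < k - 2 →
      ⁅E, ι1 (b (Sum.inl i))⁆ = ι1 (b (Sum.inl i)) :=
    fun i hi => by rw [hE, bmap, hblt i hi]
  have bEYmid : ⁅E, ι1 (b (Sum.inl aa))⁆ = ι1 (b (Sum.inl cc)) := by
    rw [hE, bmap, hbmid aa cc rfl rfl]
  have bEYtop : ⁅E, ι1 (b (Sum.inl cc))⁆ = 0 := by
    rw [hE, bmap, hbtop cc rfl, map_zero ι1]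
  have mEp_lt : ∀ i : Fin k, (i : ℕ) < k - 2 →
      ⁅E ^ p, ι1 (b (Sum.inl i))⁆ = ι1 (b (Sum.inl i)) := fun i hi => by
    rw [Ring.lie_def]
    exact comm1 p E _ (by rw [← Ring.lie_def]; exact bEYlt i hi)
  have hcommEtop : Commute E (ι1 (b (Sum.inl cc))) := by
    have h := bEYtop; rwa [Ring.lie_def, sub_eq_zero] at h
  have mEp_mid : ⁅E ^ p, ι1 (b (Sum.inl aa))⁆ = 0 := by
    rw [Ring.lie_def, sub_eq_zero]
    exact comm2 p E _ (ι1 (b (Sum.inl cc)))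
      (by rw [← Ring.lie_def]; exact bEYmid) hcommEtop
  have mEp_top : ⁅E ^ p, ι1 (b (Sum.inl cc))⁆ = 0 := by
    rw [Ring.lie_def, sub_eq_zero]; exact (hcommEtop.pow_left p).eq
  have mEp_E : ⁅E ^ p, E⁆ = 0 := by
    rw [Ring.lie_def, sub_eq_zero]; exact ((Commute.refl E).pow_left p).eq
  have mE_Ep : ⁅E, E ^ p⁆ = 0 := by rw [← lie_skew, mEp_E, neg_zero]
  -- bracket of G (inr 1) with the Y's
  have bC'Y : ∀ i : Fin k, ⁅E ^ p - Z, ι1 (b (Sum.inl i))⁆ =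
      ⁅E ^ p, ι1 (b (Sum.inl i))⁆ := fun i => by
    rw [sub_lie, bZv (Sum.inl i), sub_zero]
  have hcond : ∀ u v, (b'.constr 𝕜 G) ⁅b' u, b' v⁆ = ⁅G u, G v⁆ := by
    have hgb : ∀ u, (b'.constr 𝕜 G) (b' u) = G u := fun u => b'.constr_basis 𝕜 G u
    have fin2 : ∀ r : Fin 2, r = 0 ∨ r = 1 := by decide
    have hmain : ∀ (r : Fin 2) (v),
        (b'.constr 𝕜 G) ⁅b' (Sum.inr r), b' v⁆ = ⁅G (Sum.inr r), G v⁆ := by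
      intro r v
      rcases fin2 r with rfl | rfl
      · -- r = 0 : D acts
        rcases v with i | r2
        · have hik : (i : ℕ) < k := i.isLt
          rcases (by omega : (i : ℕ) < k - 2 ∨ (i : ℕ) = k - 2 ∨ (i : ℕ) = k - 1)
            with hi | hi | hi
          · rw [(hlt i hi).1, hgb, hG0, hGl, bEYlt i hi]
          · have hia : i = aa := Fin.ext hi
            rw [hia, (hmid aa cc rfl rfl).1, hgb, hG0, hGl cc, hGl aa, bEYmid]
          · have hic : i = cc := Fin.ext hi
            rw [hic, (htop cc rfl).1, map_zero, hG0, hGl cc, bEYtop]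
        · rcases fin2 r2 with rfl | rfl
          · rw [lie_self, map_zero, lie_self]
          · rw [hDD', map_zero, hG0, hG1, lie_sub, mE_Ep, hZ, hE, bmap,
              ← lie_skew, hbc (Sum.inr 1)]
            simp
      · -- r = 1 : D' acts
        rcases v with i | r2
        · have hik : (i : ℕ) < k := i.isLt
          rcases (by omega : (i : ℕ) < k - 2 ∨ (i : ℕ) = k - 2 ∨ (i : ℕ) = k - 1)
            with hi | hi | hi
          · rw [(hlt i hi).2, hgb, hG1, hGl, bC'Y, mEp_lt i hi]
          · have hia : i = aa := Fin.ext hi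
            rw [hia, (hmid aa cc rfl rfl).2, map_zero, hG1, hGl aa, bC'Y, mEp_mid]
          · have hic : i = cc := Fin.ext hi
            rw [hic, (htop cc rfl).2, map_zero, hG1, hGl cc, bC'Y, mEp_top]
        · rcases fin2 r2 with rfl | rfl
          · have hL : ⁅b' (Sum.inr 1), b' (Sum.inr 0)⁆ = 0 := by
              rw [← lie_skew, hDD', neg_zero]
            rw [hL, map_zero, hG1, hG0, sub_lie, mEp_E, bZv (Sum.inr 1), sub_self]
          · rw [lie_self, map_zero, lie_self]
    intro u v
    rcases u with i | r
    · rcases v with j | r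
      · rw [hx i j, map_zero, hGl, hGl, bmap, hbx i j, map_zero ι1]
      · calc (b'.constr 𝕜 G) ⁅b' (Sum.inl i), b' (Sum.inr r)⁆
            = -((b'.constr 𝕜 G) ⁅b' (Sum.inr r), b' (Sum.inl i)⁆) := by
              rw [← map_neg, lie_skew]
          _ = -⁅G (Sum.inr r), G (Sum.inl i)⁆ := by rw [hmain r (Sum.inl i)]
          _ = ⁅G (Sum.inl i), G (Sum.inr r)⁆ := lie_skew _ _
    · exact hmain r v
  obtain ⟨g, hgx⟩ := exists_lieHom b' G hcond
  refine ⟨UniversalEnvelopingAlgebra.lift 𝕜 g, ?_, ?_, ?_⟩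
  · intro i
    rw [UniversalEnvelopingAlgebra.lift_ι_apply, hgx, b'.constr_basis]
    exact hGl i
  · rw [UniversalEnvelopingAlgebra.lift_ι_apply, hgx, b'.constr_basis]
    exact hG0
  · rw [UniversalEnvelopingAlgebra.lift_ι_apply, hgx, b'.constr_basis]
    exact hG1

lemma iso_exists (p k : ℕ) [hp : Fact p.Prime] (hk : 3 ≤ k)
    (𝕜 : Type u) [Field 𝕜] [CharP 𝕜 p]
    (L : Type v) [LieRing L] [LieAlgebra 𝕜 L]
    (L' : Type w) [LieRing L'] [LieAlgebra 𝕜 L']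
    (b : Basis (Fin k ⊕ Fin 2) 𝕜 L) (hb : IsLBasis b)
    (b' : Basis (Fin k ⊕ Fin 2) 𝕜 L') (hb' : IsL'Basis b') :
    Nonempty (UniversalEnvelopingAlgebra 𝕜 L ≃ₐ[𝕜] UniversalEnvelopingAlgebra 𝕜 L') := by
  obtain ⟨Φ, hΦl, hΦ1, hΦ0⟩ := phi_exists p k hk 𝕜 L L' b hb b' hb'
  obtain ⟨Ψ, hΨl, hΨ0, hΨ1⟩ := psi_exists p k hk 𝕜 L L' b hb b' hb'
  have fin2 : ∀ r : Fin 2, r = 0 ∨ r = 1 := by decide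
  have hbasis1 : ∀ u, Ψ (Φ (UniversalEnvelopingAlgebra.ι 𝕜 (b u))) =
      UniversalEnvelopingAlgebra.ι 𝕜 (b u) := by
    rintro (i | r)
    · rw [hΦl, hΨl]
    · rcases fin2 r with rfl | rfl
      · rw [hΦ0, map_sub, map_pow, hΨ0, hΨ1, sub_sub_cancel]
      · rw [hΦ1, hΨ0]
  have hbasis2 : ∀ u, Φ (Ψ (UniversalEnvelopingAlgebra.ι 𝕜 (b' u))) =
      UniversalEnvelopingAlgebra.ι 𝕜 (b' u) := by
    rintro (i | r)
    · rw [hΨl, hΦl]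
    · rcases fin2 r with rfl | rfl
      · rw [hΨ0, hΦ1]
      · rw [hΨ1, map_sub, map_pow, hΦ1, hΦ0, sub_sub_cancel]
  have hlin1 : ((Ψ.comp Φ).toLinearMap).comp
        (UniversalEnvelopingAlgebra.ι 𝕜 : L →ₗ⁅𝕜⁆ UniversalEnvelopingAlgebra 𝕜 L).toLinearMap =
      (UniversalEnvelopingAlgebra.ι 𝕜 : L →ₗ⁅𝕜⁆ UniversalEnvelopingAlgebra 𝕜 L).toLinearMap :=
    b.ext (fun u => by simpa using hbasis1 u)
  have hlin2 : ((Φ.comp Ψ).toLinearMap).comp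
        (UniversalEnvelopingAlgebra.ι 𝕜 : L' →ₗ⁅𝕜⁆ UniversalEnvelopingAlgebra 𝕜 L').toLinearMap =
      (UniversalEnvelopingAlgebra.ι 𝕜 : L' →ₗ⁅𝕜⁆ UniversalEnvelopingAlgebra 𝕜 L').toLinearMap :=
    b'.ext (fun u => by simpa using hbasis2 u)
  have hcomp1 : Ψ.comp Φ = AlgHom.id 𝕜 (UniversalEnvelopingAlgebra 𝕜 L) := by
    apply UniversalEnvelopingAlgebra.hom_ext
    apply LieHom.ext
    intro x
    have := LinearMap.congr_fun hlin1 x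
    simpa using this
  have hcomp2 : Φ.comp Ψ = AlgHom.id 𝕜 (UniversalEnvelopingAlgebra 𝕜 L') := by
    apply UniversalEnvelopingAlgebra.hom_ext
    apply LieHom.ext
    intro x
    have := LinearMap.congr_fun hlin2 x
    simpa using this
  exact ⟨AlgEquiv.ofAlgHom Φ Ψ hcomp2 hcomp1⟩

lemma coord_of_sum {𝕜 : Type*} [Field 𝕜] {M : Type*} [AddCommGroup M] [Module 𝕜 M]
    {ι : Type*} [Fintype ι] (b : Basis ι 𝕜 M) (c : ι → 𝕜) (w : ι → M)
    (h : ∑ u, c u • w u = 0) (j : ι) :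
    ∑ u, c u * b.repr (w u) j = 0 := by
  have := congrArg (fun m => b.repr m j) h
  simpa [map_sum, map_smul, Finset.sum_apply', Finsupp.smul_apply, smul_eq_mul] using this

lemma central_L' (k : ℕ) (hk : 3 ≤ k)
    (𝕜 : Type u) [Field 𝕜]
    (L' : Type w) [LieRing L'] [LieAlgebra 𝕜 L']
    (b' : Basis (Fin k ⊕ Fin 2) 𝕜 L') (hb' : IsL'Basis b')
    (z : L') (hz : ∀ w : L', ⁅w, z⁆ = 0) :
    ∃ t : 𝕜, z = t • b' (Sum.inl ⟨k - 1, by omega⟩) := by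
  classical
  obtain ⟨hx, hDD', hlt, hmid, htop⟩ := hb'
  set aa : Fin k := ⟨k - 2, by omega⟩ with haa
  set cc : Fin k := ⟨k - 1, by omega⟩ with hcc
  have haav : (aa : ℕ) = k - 2 := rfl
  have hccv : (cc : ℕ) = k - 1 := rfl
  set c : (Fin k ⊕ Fin 2) →₀ 𝕜 := b'.repr z with hc
  have hrep : ∑ u, c u • b' u = z := b'.sum_repr z
  have fin2 : ∀ r : Fin 2, r = 0 ∨ r = 1 := by decide
  have hzw : ∀ w : L', ⁅z, w⁆ = 0 := fun w => by
    rw [← lie_skew, hz w, neg_zero]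
  have hsum : ∀ x : L', ∑ u, c u • ⁅x, b' u⁆ = 0 := by
    intro x
    have : (LieAlgebra.ad 𝕜 L' x) (∑ u, c u • b' u) =
        ∑ u, c u • (LieAlgebra.ad 𝕜 L' x) (b' u) := by
      rw [map_sum]
      exact Finset.sum_congr rfl (fun u _ => by rw [map_smul])
    rw [hrep] at this
    simp only [LieAlgebra.ad_apply] at this
    rw [← this, hz x]
  have hsum' : ∀ x : L', ∑ u, c u • ⁅b' u, x⁆ = 0 := by
    intro x
    have h1 := hsum x
    have : ∑ u, c u • ⁅b' u, x⁆ = -∑ u, c u • ⁅x, b' u⁆ := by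
      rw [← Finset.sum_neg_distrib]
      exact Finset.sum_congr rfl (fun u _ => by rw [← smul_neg, lie_skew])
    rw [this, h1, neg_zero]
  -- E1 : c (inl i0) = 0 for i0 < k - 2
  have E1 : ∀ i0 : Fin k, (i0 : ℕ) < k - 2 → c (Sum.inl i0) = 0 := by
    intro i0 hi0
    have h0 := coord_of_sum b' c (fun u => ⁅b' (Sum.inr 0), b' u⁆)
      (hsum (b' (Sum.inr 0))) (Sum.inl i0)
    rw [Finset.sum_eq_single (Sum.inl i0)] at h0
    · rwa [(hlt i0 hi0).1, Basis.repr_self_apply, if_pos rfl, mul_one] at h0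
    · rintro (i | r) _ hu
      · have hik : (i : ℕ) < k := i.isLt
        rcases (by omega : (i : ℕ) < k - 2 ∨ (i : ℕ) = k - 2 ∨ (i : ℕ) = k - 1)
          with hi | hi | hi
        · rw [(hlt i hi).1, Basis.repr_self_apply, if_neg hu, mul_zero]
        · have hiaa : i = aa := Fin.ext hi
          rw [hiaa, (hmid aa cc rfl rfl).1, Basis.repr_self_apply,
            if_neg (by simp only [Sum.inl.injEq]; intro h; rw [← h] at hi0; omega), mul_zero]
        · have : i = cc := Fin.ext hi
          rw [this, (htop cc rfl).1, map_zero, Finsupp.coe_zero, Pi.zero_apply, mul_zero]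
      · rcases fin2 r with rfl | rfl
        · rw [lie_self, map_zero, Finsupp.coe_zero, Pi.zero_apply, mul_zero]
        · rw [hDD', map_zero, Finsupp.coe_zero, Pi.zero_apply, mul_zero]
    · intro h; exact absurd (Finset.mem_univ _) h
  -- E2 : c (inl aa) = 0
  have E2 : c (Sum.inl aa) = 0 := by
    have h0 := coord_of_sum b' c (fun u => ⁅b' (Sum.inr 0), b' u⁆)
      (hsum (b' (Sum.inr 0))) (Sum.inl cc)
    rw [Finset.sum_eq_single (Sum.inl aa)] at h0
    · rwa [(hmid aa cc rfl rfl).1, Basis.repr_self_apply, if_pos rfl, mul_one] at h0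
    · rintro (i | r) _ hu
      · have hik : (i : ℕ) < k := i.isLt
        rcases (by omega : (i : ℕ) < k - 2 ∨ (i : ℕ) = k - 2 ∨ (i : ℕ) = k - 1)
          with hi | hi | hi
        · rw [(hlt i hi).1, Basis.repr_self_apply,
            if_neg (by simp only [Sum.inl.injEq]; intro h; rw [h] at hi; omega),
            mul_zero]
        · exact absurd (congrArg Sum.inl (Fin.ext hi : i = aa)) hu
        · have : i = cc := Fin.ext hi
          rw [this, (htop cc rfl).1, map_zero, Finsupp.coe_zero, Pi.zero_apply, mul_zero]
      · rcases fin2 r with rfl | rfl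
        · rw [lie_self, map_zero, Finsupp.coe_zero, Pi.zero_apply, mul_zero]
        · rw [hDD', map_zero, Finsupp.coe_zero, Pi.zero_apply, mul_zero]
    · intro h; exact absurd (Finset.mem_univ _) h
  -- E3 : c (inr 0) = 0
  have E3 : c (Sum.inr 0) = 0 := by
    have h0 := coord_of_sum b' c (fun u => ⁅b' u, b' (Sum.inl aa)⁆)
      (hsum' (b' (Sum.inl aa))) (Sum.inl cc)
    rw [Finset.sum_eq_single (Sum.inr 0)] at h0
    · rwa [(hmid aa cc rfl rfl).1, Basis.repr_self_apply, if_pos rfl, mul_one] at h0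
    · rintro (i | r) _ hu
      · rw [hx i aa, map_zero, Finsupp.coe_zero, Pi.zero_apply, mul_zero]
      · rcases fin2 r with rfl | rfl
        · exact absurd rfl hu
        · rw [(hmid aa cc rfl rfl).2, map_zero, Finsupp.coe_zero, Pi.zero_apply, mul_zero]
    · intro h; exact absurd (Finset.mem_univ _) h
  -- E4 : c (inr 1) = 0
  have E4 : c (Sum.inr 1) = 0 := by
    set i0 : Fin k := ⟨0, by omega⟩ with hi0
    have hi0lt : (i0 : ℕ) < k - 2 := by simp [hi0]; omega
    have h0 := coord_of_sum b' c (fun u => ⁅b' u, b' (Sum.inl i0)⁆)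
      (hsum' (b' (Sum.inl i0))) (Sum.inl i0)
    rw [Finset.sum_eq_single (Sum.inr 1)] at h0
    · rwa [(hlt i0 hi0lt).2, Basis.repr_self_apply, if_pos rfl, mul_one] at h0
    · rintro (i | r) _ hu
      · rw [hx i i0, map_zero, Finsupp.coe_zero, Pi.zero_apply, mul_zero]
      · rcases fin2 r with rfl | rfl
        · rw [E3, zero_mul]
        · exact absurd rfl hu
    · intro h; exact absurd (Finset.mem_univ _) h
  refine ⟨c (Sum.inl cc), ?_⟩
  rw [← hrep, Finset.sum_eq_single (Sum.inl cc)]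
  · rintro (i | r) _ hu
    · have hik : (i : ℕ) < k := i.isLt
      rcases (by omega : (i : ℕ) < k - 2 ∨ (i : ℕ) = k - 2 ∨ (i : ℕ) = k - 1)
        with hi | hi | hi
      · rw [E1 i hi, zero_smul]
      · rw [(Fin.ext hi : i = aa), E2, zero_smul]
      · exact absurd (congrArg Sum.inl (Fin.ext hi : i = cc)) hu
    · rcases fin2 r with rfl | rfl
      · rw [E3, zero_smul]
      · rw [E4, zero_smul]
  · intro h; exact absurd (Finset.mem_univ _) h

lemma no_lie_iso (k : ℕ) (hk : 3 ≤ k)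
    (𝕜 : Type u) [Field 𝕜]
    (L : Type v) [LieRing L] [LieAlgebra 𝕜 L]
    (L' : Type w) [LieRing L'] [LieAlgebra 𝕜 L']
    (b : Basis (Fin k ⊕ Fin 2) 𝕜 L) (hb : IsLBasis b)
    (b' : Basis (Fin k ⊕ Fin 2) 𝕜 L') (hb' : IsL'Basis b') :
    IsEmpty (L ≃ₗ⁅𝕜⁆ L') := by
  constructor
  intro e
  obtain ⟨hbx, hbc, hblt, hbmid, hbtop⟩ := hb
  set cc : Fin k := ⟨k - 1, by omega⟩ with hcc
  have fin2 : ∀ r : Fin 2, r = 0 ∨ r = 1 := by decide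
  -- elements killed by all basis brackets are central
  have hcentral : ∀ y : L, (∀ u, ⁅b u, y⁆ = 0) → ∀ w : L, ⁅w, y⁆ = 0 := by
    intro y hy
    have had : (LieAlgebra.ad 𝕜 L y) = 0 := by
      apply b.ext
      intro u
      rw [LieAlgebra.ad_apply, ← lie_skew, hy u, neg_zero, LinearMap.zero_apply]
    intro w
    rw [← lie_skew, ← LieAlgebra.ad_apply 𝕜, had, LinearMap.zero_apply, neg_zero]
  have hc1 : ∀ w : L, ⁅w, b (Sum.inr 0)⁆ = 0 :=
    hcentral _ (fun u => by rw [← lie_skew, hbc u, neg_zero])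
  have hc2 : ∀ w : L, ⁅w, b (Sum.inl cc)⁆ = 0 := by
    apply hcentral
    rintro (j | r)
    · exact hbx j cc
    · rcases fin2 r with rfl | rfl
      · exact hbc (Sum.inl cc)
      · exact hbtop cc rfl
  -- images are central in L'
  have ecoe : ⇑e = ⇑(e : L ≃ₗ[𝕜] L') := (LieEquiv.coe_toLinearEquiv e).symm
  have ecoe' : ⇑e.symm = ⇑(e.symm : L' ≃ₗ[𝕜] L) := (LieEquiv.coe_toLinearEquiv e.symm).symm
  have himg : ∀ y : L, (∀ w : L, ⁅w, y⁆ = 0) → ∀ w' : L', ⁅w', e y⁆ = 0 := by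
    intro y hy w'
    calc ⁅w', e y⁆ = ⁅e (e.symm w'), e y⁆ := by rw [e.apply_symm_apply]
      _ = e ⁅e.symm w', y⁆ := (e.map_lie _ _).symm
      _ = 0 := by rw [hy (e.symm w'), ecoe, map_zero]
  obtain ⟨t1, ht1⟩ := central_L' k hk 𝕜 L' b' hb' (e (b (Sum.inr 0))) (himg _ hc1)
  obtain ⟨t2, ht2⟩ := central_L' k hk 𝕜 L' b' hb' (e (b (Sum.inl cc))) (himg _ hc2)
  have ht2ne : t2 ≠ 0 := by
    intro h
    rw [h, zero_smul] at ht2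
    have : b (Sum.inl cc) = 0 := by
      have h' := congrArg e.symm ht2
      rw [e.symm_apply_apply] at h'
      rw [h', ecoe', map_zero]
    exact Basis.ne_zero b (Sum.inl cc) this
  have hcomb : e (t2 • b (Sum.inr 0) - t1 • b (Sum.inl cc)) = 0 := by
    rw [ecoe, map_sub, map_smul, map_smul, ← ecoe, ht1, ht2, smul_smul, smul_smul,
      mul_comm, sub_self]
  have h0 : t2 • b (Sum.inr 0) - t1 • b (Sum.inl cc) = 0 := by
    have h' := congrArg e.symm hcomb
    rw [e.symm_apply_apply] at h'
    rw [h', ecoe', map_zero]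
  have h1 := congrArg (fun y => b.repr y (Sum.inr 0)) h0
  simp only [map_sub, map_smul, Finsupp.sub_apply, Finsupp.smul_apply, smul_eq_mul,
    Basis.repr_self_apply, map_zero, Finsupp.coe_zero, Pi.zero_apply] at h1
  rw [if_neg (fun h => Sum.inl_ne_inr h), mul_zero, sub_zero, if_pos trivial, mul_one] at h1
  exact ht2ne h1


/-- `U(L)` and `U(L')` are isomorphic as associative `𝕜`-algebras, although
`L` and `L'` are not isomorphic as Lie algebras. -/
theorem stmt17 (p k : ℕ) (hp : p.Prime) (hk : 3 ≤ k)
    (𝕜 : Type u) [Field 𝕜] [IsAlgClosed 𝕜] [CharP 𝕜 p]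
    (L : Type v) [LieRing L] [LieAlgebra 𝕜 L]
    (L' : Type v) [LieRing L'] [LieAlgebra 𝕜 L']
    (b : Basis (Fin k ⊕ Fin 2) 𝕜 L) (hb : IsLBasis b)
    (b' : Basis (Fin k ⊕ Fin 2) 𝕜 L') (hb' : IsL'Basis b') :
    Nonempty (UniversalEnvelopingAlgebra 𝕜 L ≃ₐ[𝕜] UniversalEnvelopingAlgebra 𝕜 L') ∧
    IsEmpty (L ≃ₗ⁅𝕜⁆ L') := by
  haveI : Fact p.Prime := ⟨hp⟩
  exact ⟨iso_exists p k hk 𝕜 L L' b hb b' hb', no_lie_iso k hk 𝕜 L L' b hb b' hb'⟩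
end

section
/- The Lie algebra L is not restrictable: the p-th power ad(D)^p (computed in End(L)) does not lie in ad(L), the image of the adjoint map ad : L → End(L). -/
universe u v w

open Module

/-- `L` is not restrictable: `ad(D) ^ p` does not lie in the image of
`ad : L → End(L)`. -/
theorem stmt18 (p k : ℕ) (hp : p.Prime) (hk : 3 ≤ k)
    (𝕜 : Type u) [Field 𝕜] [IsAlgClosed 𝕜] [CharP 𝕜 p]
    (L : Type v) [LieRing L] [LieAlgebra 𝕜 L]
    (b : Basis (Fin k ⊕ Fin 2) 𝕜 L) (hb : IsLBasis b) :
    (LieAlgebra.ad 𝕜 L (b (Sum.inr 1))) ^ p ∉ Set.range (LieAlgebra.ad 𝕜 L) := by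
  obtain ⟨h1, h2, h3, h4, h5⟩ := hb
  rintro ⟨z, hz⟩
  have hp2 : 2 ≤ p := hp.two_le
  set D : L := b (Sum.inr 1) with hD
  set c : 𝕜 := b.repr z (Sum.inr 1) with hc
  -- general computation of ⁅z, x_i⁆
  have key : ∀ i : Fin k, ⁅z, b (Sum.inl i)⁆ = c • ⁅D, b (Sum.inl i)⁆ := by
    intro i
    have hz' : z = ∑ v : Fin k ⊕ Fin 2, b.repr z v • b v := (b.sum_repr z).symm
    calc ⁅z, b (Sum.inl i)⁆
        = (LieAlgebra.ad 𝕜 L z) (b (Sum.inl i)) := rfl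
      _ = ((LieAlgebra.ad 𝕜 L : L →ₗ[𝕜] Module.End 𝕜 L) z) (b (Sum.inl i)) := rfl
      _ = ∑ v : Fin k ⊕ Fin 2, b.repr z v • ⁅b v, b (Sum.inl i)⁆ := by
          conv_lhs => rw [hz']
          rw [map_sum, LinearMap.sum_apply]
          refine Finset.sum_congr rfl fun v _ => ?_
          rw [map_smul, LinearMap.smul_apply]
          rfl
      _ = c • ⁅D, b (Sum.inl i)⁆ := by
          rw [Fintype.sum_sum_type, Fin.sum_univ_two]
          simp [h1, h2]
          rfl
  have i0 : Fin k := ⟨0, by omega⟩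
  -- x_0 is a fixed point of ad D
  have hfix : (LieAlgebra.ad 𝕜 L D) (b (Sum.inl ⟨0, by omega⟩)) = b (Sum.inl ⟨0, by omega⟩) := by
    rw [LieAlgebra.ad_apply]
    exact h3 ⟨0, by omega⟩ (by simp; omega)
  have hpow0 : ((LieAlgebra.ad 𝕜 L D) ^ p) (b (Sum.inl ⟨0, by omega⟩))
      = b (Sum.inl ⟨0, by omega⟩) := by
    rw [Module.End.pow_apply]
    exact Function.iterate_fixed hfix p
  -- deduce c = 1
  have hcz : c • (b (Sum.inl ⟨0, by omega⟩)) = b (Sum.inl ⟨0, by omega⟩) := by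
    have h := congrFun (congrArg DFunLike.coe hz) (b (Sum.inl ⟨0, by omega⟩))
    rw [hpow0, LieAlgebra.ad_apply, key, h3 ⟨0, by omega⟩ (by simp; omega)] at h
    exact h
  have hc1 : c = 1 := by
    by_contra hne
    have : (c - 1) • (b (Sum.inl ⟨0, by omega⟩)) = 0 := by
      rw [sub_smul, one_smul, hcz, sub_self]
    rcases smul_eq_zero.mp this with h' | h'
    · exact hne (sub_eq_zero.mp h')
    · exact b.ne_zero _ h'
  -- now the contradiction with x_{k-2}
  have hk2 : k - 2 < k := by omega
  have hk1 : k - 1 < k := by omega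
  have hlie1 : ⁅D, b (Sum.inl ⟨k - 2, hk2⟩)⁆ = b (Sum.inl ⟨k - 1, hk1⟩) :=
    h4 ⟨k - 2, hk2⟩ ⟨k - 1, hk1⟩ rfl rfl
  have hlie2 : ⁅D, b (Sum.inl ⟨k - 1, hk1⟩)⁆ = 0 := h5 ⟨k - 1, hk1⟩ rfl
  obtain ⟨m, hm⟩ : ∃ m, p = m + 2 := ⟨p - 2, by omega⟩
  have hpow1 : ((LieAlgebra.ad 𝕜 L D) ^ p) (b (Sum.inl ⟨k - 2, hk2⟩)) = 0 := by
    rw [hm, pow_succ, pow_succ, Module.End.mul_apply, LieAlgebra.ad_apply, hlie1,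
      Module.End.mul_apply, LieAlgebra.ad_apply, hlie2, map_zero]
  have h := congrFun (congrArg DFunLike.coe hz) (b (Sum.inl ⟨k - 2, hk2⟩))
  rw [hpow1, LieAlgebra.ad_apply, key, hlie1, hc1, one_smul] at h
  exact b.ne_zero _ h
end
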